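/- Suppose χ : ℝ × (ℝⁿ)^{k} × ℝⁿ → ℝⁿ is a smooth map satisfying (∂L/∂q_k)(t, q_0, …, q_{k−1}, χ(t, q_0, …, q_{k−1}, π)) = π for all arguments (a smooth inverse of the highest Legendre relation), and define the Hamiltonian function H(t, q_0, …, q_{k−1}, p^0, …, p^{k−1}) = Σ_{i=0}^{k−2} ⟨p^i, q_{i+1}⟩ + ⟨p^{k−1}, χ⟩ − L(t, q_0, …, q_{k−1}, χ), where χ is evaluated at (t, q_0, …, q_{k−1}, p^{k−1}). Let q_0, …, q_{k−1}, p^0, …, p^{k−1} : ℝ → ℝⁿ be smooth curves and set q_k(t) = χ(t, q_0(t), …, q_{k−1}(t), p^{k−1}(t)). Then the following two systems of equations are equivalent for all t: (A) q_i′ = q_{i+1} for 0 ≤ i ≤ k−1, (p^0)′ = ∂L/∂q_0, and (p^i)′ = ∂L/∂q_i − p^{i−1} for 1 ≤ i ≤ k−1 (partial gradients of L evaluated at (t, q_0(t), …, q_k(t))); (B) the Hamilton equations q_i′ = ∂H/∂p^i and (p^i)′ = −∂H/∂q_i for 0 ≤ i ≤ k−1 (partial gradients of H evaluated along the curve). 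-/

import Mathlib

open scoped ContDiff RealInnerProductSpace

noncomputable section

/-- `ℝⁿ` as a Euclidean space. -/
abbrev Evec (n : ℕ) := EuclideanSpace ℝ (Fin n)

/-- The partial gradient `∂L/∂q_i` of a `k`-th order Lagrangian
`L : ℝ × (ℝⁿ)^(k+1) → ℝ` with respect to the variable `q_i`. -/
noncomputable def pgrad {n k : ℕ} (L : ℝ × (Fin (k+1) → Evec n) → ℝ)
    (i : Fin (k+1)) (x : ℝ × (Fin (k+1) → Evec n)) : Evec n :=
  gradient (fun v => L (x.1, Function.update x.2 i v)) (x.2 i)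

section helpers
variable {n k : ℕ}

lemma hasGradientAt_of {f : Evec n → ℝ} {D : Evec n →L[ℝ] ℝ} {g x : Evec n}
    (hf : HasFDerivAt f D x) (h : ∀ u, D u = ⟪g, u⟫) : HasGradientAt f g x := by
  have hD : D = InnerProductSpace.toDual ℝ (Evec n) g := by
    ext u; simp [h u, InnerProductSpace.toDual_apply_apply]
  rw [hasGradientAt_iff_hasFDerivAt]; exact hD ▸ hf

def Mi (n k : ℕ) (i : Fin (k+1)) : Evec n →L[ℝ] ℝ × (Fin (k+1) → Evec n) :=
  ContinuousLinearMap.prod 0 (ContinuousLinearMap.pi (Pi.single i (ContinuousLinearMap.id ℝ (Evec n))))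

lemma Mi_apply (i : Fin (k+1)) (u : Evec n) : Mi n k i u = ((0:ℝ), Pi.single i u) := by
  refine Prod.ext rfl ?_
  funext j
  by_cases h : j = i
  · subst h; simp [Mi]
  · simp [Mi, Pi.single_apply, h]

lemma fderiv_apply_single {L : ℝ × (Fin (k+1) → Evec n) → ℝ} (hL : Differentiable ℝ L)
    (z : ℝ × (Fin (k+1) → Evec n)) (i : Fin (k+1)) (u : Evec n) :
    fderiv ℝ L z ((0:ℝ), Pi.single i u) = ⟪pgrad L i z, u⟫ := by
  have hA : HasFDerivAt (fun v => (z.1, Function.update z.2 i v)) (Mi n k i) (z.2 i) :=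
    HasFDerivAt.prodMk (hasFDerivAt_const z.1 _) (hasFDerivAt_update z.2 _)
  have hg : HasFDerivAt (fun v => L (z.1, Function.update z.2 i v))
      ((fderiv ℝ L z).comp (Mi n k i)) (z.2 i) := by
    have := ((hL _).hasFDerivAt).comp (z.2 i) hA
    simp only [Function.update_eq_self] at this
    exact this
  have hg2 : HasGradientAt (fun v => L (z.1, Function.update z.2 i v)) (pgrad L i z) (z.2 i) :=
    hg.differentiableAt.hasGradientAt
  have hu := hg2.hasFDerivAt.unique hg
  calc fderiv ℝ L z ((0:ℝ), Pi.single i u) = ((fderiv ℝ L z).comp (Mi n k i)) u := by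
        rw [ContinuousLinearMap.comp_apply, Mi_apply]
    _ = ⟪pgrad L i z, u⟫ := by rw [← hu]; simp [InnerProductSpace.toDual_apply_apply]

lemma fderiv_apply_pair {L : ℝ × (Fin (k+1) → Evec n) → ℝ} (hL : Differentiable ℝ L)
    (z : ℝ × (Fin (k+1) → Evec n)) (e : Fin (k+1) → Evec n) :
    fderiv ℝ L z ((0:ℝ), e) = ∑ i, ⟪pgrad L i z, e i⟫ := by
  have he : ((0:ℝ), e) = ∑ i, ((0:ℝ), Pi.single i (e i)) := by
    refine Prod.ext (by rw [Prod.fst_sum]; simp) ?_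
    rw [Prod.snd_sum]
    exact (Finset.univ_sum_single e).symm
  rw [he, map_sum]
  exact Finset.sum_congr rfl fun i _ => fderiv_apply_single hL z i _

lemma hasGradientAt_snoc {L : ℝ × (Fin (k+1) → Evec n) → ℝ} (hL : Differentiable ℝ L)
    (t : ℝ) (qs : Fin k → Evec n) (w₀ : Evec n) :
    HasGradientAt (fun w => L (t, Fin.snoc qs w)) (pgrad L (Fin.last k) (t, Fin.snoc qs w₀)) w₀ := by
  have hd : DifferentiableAt ℝ (fun w => L (t, Fin.snoc qs w)) w₀ := by
    have h0 : DifferentiableAt ℝ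
        (fun w => L (t, Function.update (Fin.snoc qs (0 : Evec n) : Fin (k+1) → Evec n) (Fin.last k) w)) w₀ :=
      (hL _).comp _ (DifferentiableAt.prodMk (differentiableAt_const t)
        (hasFDerivAt_update (Fin.snoc qs (0 : Evec n) : Fin (k+1) → Evec n) w₀).differentiableAt)
    refine h0.congr_of_eventuallyEq (Filter.Eventually.of_forall fun w => ?_)
    simp only [Fin.update_snoc_last]
  have h2 : pgrad L (Fin.last k) (t, Fin.snoc qs w₀)
      = gradient (fun w => L (t, Fin.snoc qs w)) w₀ := by
    have hfun : (fun v => L (t, Function.update (Fin.snoc qs w₀) (Fin.last k) v))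
        = (fun w => L (t, Fin.snoc qs w)) := by
      funext v; rw [Fin.update_snoc_last]
    simp only [pgrad, hfun, Fin.snoc_last]
  rw [h2]; exact hd.hasGradientAt

end helpers

section grads

variable {n k : ℕ}

def Ei (n k : ℕ) (I i : Fin k) : Evec n →L[ℝ] Evec n :=
  (ContinuousLinearMap.proj (R := ℝ) (φ := fun _ : Fin k => Evec n) i).comp
    (ContinuousLinearMap.pi (Pi.single I (ContinuousLinearMap.id ℝ (Evec n))))

lemma Ei_apply (I i : Fin k) (u : Evec n) : Ei n k I i u = (Pi.single I u : Fin k → Evec n) i := by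
  by_cases h : i = I
  · subst h; simp [Ei]
  · simp [Ei, Pi.single_apply, h]

def Sgl (n k : ℕ) (i : Fin (k+1)) : Evec n →L[ℝ] (Fin (k+1) → Evec n) :=
  ContinuousLinearMap.pi (Pi.single i (ContinuousLinearMap.id ℝ (Evec n)))

lemma Sgl_apply (i : Fin (k+1)) (u : Evec n) : Sgl n k i u = Pi.single i u := by
  funext j
  by_cases h : j = i
  · subst h; simp [Sgl]
  · simp [Sgl, Pi.single_apply, h]

lemma gradG3 (hk : 1 ≤ k)
    (L : ℝ × (Fin (k+1) → Evec n) → ℝ) (hL : Differentiable ℝ L)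
    (χ : ℝ × (Fin k → Evec n) × Evec n → Evec n) (hχs : Differentiable ℝ χ)
    (hχ : ∀ (t : ℝ) (qs : Fin k → Evec n) (π : Evec n),
      pgrad L (Fin.last k) (t, Fin.snoc qs (χ (t, qs, π))) = π)
    (H : ℝ × (Fin k → Evec n) × (Fin k → Evec n) → ℝ)
    (hH : ∀ (t : ℝ) (qs ps : Fin k → Evec n),
      H (t, qs, ps) =
        (∑ i : Fin k, if h : (i : ℕ) + 1 < k then ⟪ps i, qs ⟨(i : ℕ)+1, h⟩⟫ else 0)
        + ⟪ps ⟨k-1, by omega⟩, χ (t, qs, ps ⟨k-1, by omega⟩)⟫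
        - L (t, Fin.snoc qs (χ (t, qs, ps ⟨k-1, by omega⟩))))
    (t : ℝ) (qs ps : Fin k → Evec n) (J : Fin k) :
    HasGradientAt (fun v => H (t, Function.update qs J v, ps))
      ((if h : 1 ≤ (J : ℕ) then ps ⟨(J : ℕ) - 1, by omega⟩ else 0)
        - pgrad L J.castSucc (t, Fin.snoc qs (χ (t, qs, ps ⟨k-1, by omega⟩))))
      (qs J) := by
  set K : Fin k := ⟨k-1, by omega⟩ with hK
  set v₀ : Evec n := qs J with hv₀
  set Φ : Evec n → Evec n := fun v => χ (t, Function.update qs J v, ps K) with hΦdef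
  set Z₀ : Fin (k+1) → Evec n :=
    Function.update (Function.update (Fin.snoc qs (0:Evec n) : Fin (k+1) → Evec n)
      J.castSucc 0) (Fin.last k) 0 with hZ₀
  have hJl : J.castSucc ≠ Fin.last k := (Fin.castSucc_lt_last J).ne
  -- structural identity for the snoc of an update
  have hAvec : ∀ (v w : Evec n),
      (Fin.snoc (Function.update qs J v) w : Fin (k+1) → Evec n)
        = Z₀ + Pi.single J.castSucc v + Pi.single (Fin.last k) w := by
    intro v w
    funext m
    refine Fin.lastCases ?_ (fun m' => ?_) m
    · simp [hZ₀, Fin.snoc_last, Pi.single_apply, hJl.symm]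
    · have h1 : m'.castSucc ≠ Fin.last k := (Fin.castSucc_lt_last m').ne
      by_cases h2 : m' = J
      · subst h2
        simp [hZ₀, Fin.snoc_castSucc, Function.update_apply, h1, Pi.single_apply, hJl]
      · have h3 : m'.castSucc ≠ J.castSucc := by
          simpa [Fin.castSucc_inj] using h2
        simp [hZ₀, Fin.snoc_castSucc, Function.update_apply, h1, h3, h2,
          Pi.single_apply, Fin.snoc_castSucc]
  -- rewrite the target function
  have hre : (fun v => H (t, Function.update qs J v, ps))
      = fun v => (∑ i : Fin k, if h : (i : ℕ) + 1 < k
            then ⟪ps i, Function.update qs J v ⟨(i : ℕ)+1, h⟩⟫ else 0)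
          + ⟪ps K, Φ v⟫ - L (t, Z₀ + Pi.single J.castSucc v + Pi.single (Fin.last k) (Φ v)) := by
    funext v
    rw [hH, ← hAvec]
  rw [hre]
  -- derivative of Φ
  have hΦd : DifferentiableAt ℝ Φ v₀ :=
    (hχs _).comp v₀ (DifferentiableAt.prodMk (differentiableAt_const t)
      (DifferentiableAt.prodMk ((hasFDerivAt_update qs v₀).differentiableAt) (differentiableAt_const (ps K))))
  set DΦ := fderiv ℝ Φ v₀ with hDΦ
  have hΦ : HasFDerivAt Φ DΦ v₀ := hΦd.hasFDerivAt
  -- key point values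
  have hupd : Function.update qs J v₀ = qs := Function.update_eq_self J qs
  have hΦ0 : Φ v₀ = χ (t, qs, ps K) := by rw [hΦdef]; simp [hupd]
  set z : ℝ × (Fin (k+1) → Evec n) := (t, Fin.snoc qs (χ (t, qs, ps K))) with hz
  have hpt : Z₀ + Pi.single J.castSucc v₀ + Pi.single (Fin.last k) (Φ v₀)
      = Fin.snoc qs (χ (t, qs, ps K)) := by
    rw [← hAvec v₀ (Φ v₀), hupd, hΦ0]
  -- derivative of the sum term
  set B' : Fin k → (Evec n →L[ℝ] ℝ) := fun i =>
    if h : (i : ℕ) + 1 < k then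
      (fderivInnerCLM ℝ ((ps i : Evec n), (qs ⟨(i : ℕ)+1, h⟩ : Evec n))).comp
        ((0 : Evec n →L[ℝ] Evec n).prod (Ei n k J ⟨(i : ℕ)+1, h⟩)) else 0 with hB'
  have hBd : ∀ i : Fin k, HasFDerivAt
      (fun v => if h : (i : ℕ) + 1 < k
        then ⟪ps i, Function.update qs J v ⟨(i : ℕ)+1, h⟩⟫ else 0) (B' i) v₀ := by
    intro i
    by_cases h : (i : ℕ) + 1 < k
    · have h1 : HasFDerivAt (fun v : Evec n => Function.update qs J v ⟨(i : ℕ)+1, h⟩)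
          (Ei n k J ⟨(i : ℕ)+1, h⟩) v₀ := by
        have h0 := hasFDerivAt_update (𝕜 := ℝ) qs (i := J) v₀
        exact HasFDerivAt.comp (𝕜 := ℝ) v₀
          ((ContinuousLinearMap.proj (R := ℝ) (φ := fun _ : Fin k => Evec n) ⟨(i : ℕ)+1, h⟩).hasFDerivAt
            (x := Function.update qs J v₀)) h0
      have := (hasFDerivAt_const (ps i) v₀).inner ℝ h1
      simp only [hupd] at this
      simpa [hB', h] using this
    · simp only [hB', dif_neg h]
      exact hasFDerivAt_const 0 v₀
  have hsum : HasFDerivAt (fun v => ∑ i : Fin k, if h : (i : ℕ) + 1 < k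
        then ⟪ps i, Function.update qs J v ⟨(i : ℕ)+1, h⟩⟫ else 0)
      (∑ i : Fin k, B' i) v₀ := HasFDerivAt.fun_sum fun i _ => hBd i
  -- derivative of the middle inner term
  have hmid : HasFDerivAt (fun v => ⟪ps K, Φ v⟫)
      ((fderivInnerCLM ℝ ((ps K : Evec n), Φ v₀)).comp
        ((0 : Evec n →L[ℝ] Evec n).prod DΦ)) v₀ :=
    (hasFDerivAt_const (ps K) v₀).inner ℝ hΦ
  -- derivative of the L term
  set N : Evec n →L[ℝ] ℝ × (Fin (k+1) → Evec n) :=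
    ContinuousLinearMap.prod 0 (Sgl n k J.castSucc + (Sgl n k (Fin.last k)).comp DΦ) with hN
  have hinmap : HasFDerivAt
      (fun v => ((t : ℝ), Z₀ + Pi.single J.castSucc v + Pi.single (Fin.last k) (Φ v))) N v₀ := by
    refine HasFDerivAt.prodMk (hasFDerivAt_const t v₀) ?_
    have h1 : HasFDerivAt (fun v : Evec n =>
          (Pi.single J.castSucc v : Fin (k+1) → Evec n)
            + (Pi.single (Fin.last k) (Φ v) : Fin (k+1) → Evec n))
        (Sgl n k J.castSucc + (Sgl n k (Fin.last k)).comp DΦ) v₀ := by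
      have ha : HasFDerivAt (fun v : Evec n => (Pi.single J.castSucc v : Fin (k+1) → Evec n))
          (Sgl n k J.castSucc) v₀ := by
        have := (Sgl n k J.castSucc).hasFDerivAt (x := v₀)
        refine this.congr_of_eventuallyEq (Filter.Eventually.of_forall fun v => ?_)
        rw [Sgl_apply]
      have hb : HasFDerivAt (fun v : Evec n => (Pi.single (Fin.last k) (Φ v) : Fin (k+1) → Evec n))
          ((Sgl n k (Fin.last k)).comp DΦ) v₀ := by
        have := ((Sgl n k (Fin.last k)).hasFDerivAt (x := Φ v₀)).comp v₀ hΦ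
        refine this.congr_of_eventuallyEq (Filter.Eventually.of_forall fun v => ?_)
        simp [Function.comp, Sgl_apply]
      exact ha.add hb
    have h2 := h1.const_add Z₀
    refine h2.congr_of_eventuallyEq (Filter.Eventually.of_forall fun v => ?_)
    simp only [add_assoc]
  have hLW : HasFDerivAt
      (fun v => L ((t : ℝ), Z₀ + Pi.single J.castSucc v + Pi.single (Fin.last k) (Φ v)))
      ((fderiv ℝ L z).comp N) v₀ := by
    set z' : ℝ × (Fin (k+1) → Evec n) :=
      ((t : ℝ), Z₀ + Pi.single J.castSucc v₀ + Pi.single (Fin.last k) (Φ v₀)) with hz'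
    have hzz : z' = z := by rw [hz', hz]; exact Prod.ext rfl hpt
    have h0 := ((hL z').hasFDerivAt).comp v₀ hinmap
    rwa [hzz] at h0
  -- assemble
  have htotal := (hsum.add hmid).sub hLW
  refine hasGradientAt_of htotal fun u => ?_
  have hNu : N u = ((0:ℝ), Pi.single J.castSucc u + Pi.single (Fin.last k) (DΦ u)) := by
    rw [hN]
    refine Prod.ext rfl ?_
    simp [ContinuousLinearMap.add_apply, Sgl_apply]
  have hLz : fderiv ℝ L z (N u) = ⟪pgrad L J.castSucc z, u⟫ + ⟪ps K, DΦ u⟫ := by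
    rw [hNu]
    have hsplit : ((0:ℝ), Pi.single J.castSucc u + Pi.single (Fin.last k) (DΦ u))
        = (((0:ℝ), Pi.single J.castSucc u) : ℝ × (Fin (k+1) → Evec n))
          + ((0:ℝ), Pi.single (Fin.last k) (DΦ u)) := by
      refine Prod.ext (by simp) rfl
    rw [hsplit, map_add, fderiv_apply_single hL z, fderiv_apply_single hL z]
    have : pgrad L (Fin.last k) z = ps K := hχ t qs (ps K)
    rw [this]
  have hsumu : (∑ i : Fin k, B' i) u
      = if h : 1 ≤ (J : ℕ) then ⟪ps ⟨(J : ℕ) - 1, by omega⟩, u⟫ else 0 := by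
    rw [ContinuousLinearMap.sum_apply]
    have hterm : ∀ i : Fin k, B' i u
        = if h : (i : ℕ) + 1 < k then ⟪ps i, (Pi.single J u : Fin k → Evec n) ⟨(i : ℕ)+1, h⟩⟫ else 0 := by
      intro i
      by_cases h : (i : ℕ) + 1 < k
      · simp [hB', h, fderivInnerCLM_apply, Ei_apply]
      · simp [hB', h]
    rw [Finset.sum_congr rfl fun i _ => hterm i]
    by_cases hJ : 1 ≤ (J : ℕ)
    · rw [dif_pos hJ]
      rw [Finset.sum_eq_single (⟨(J : ℕ) - 1, by omega⟩ : Fin k)]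
      · have hlt : ((⟨(J : ℕ) - 1, by omega⟩ : Fin k) : ℕ) + 1 < k := by
          simp only []
          omega
        rw [dif_pos hlt]
        have : (⟨((⟨(J : ℕ) - 1, by omega⟩ : Fin k) : ℕ) + 1, hlt⟩ : Fin k) = J := by
          apply Fin.ext; simp; omega
        rw [this, Pi.single_eq_same]
      · intro i _ hne
        by_cases h : (i : ℕ) + 1 < k
        · rw [dif_pos h]
          have hne2 : (⟨(i : ℕ) + 1, h⟩ : Fin k) ≠ J := by
            intro he
            apply hne
            apply Fin.ext
            have : (i : ℕ) + 1 = (J : ℕ) := by rw [← he]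
            simp; omega
          rw [Pi.single_eq_of_ne hne2]
          simp
        · rw [dif_neg h]
      · intro habs; exact absurd (Finset.mem_univ _) habs
    · rw [dif_neg hJ]
      refine Finset.sum_eq_zero fun i _ => ?_
      by_cases h : (i : ℕ) + 1 < k
      · rw [dif_pos h]
        have hne2 : (⟨(i : ℕ) + 1, h⟩ : Fin k) ≠ J := by
          intro he
          have : (i : ℕ) + 1 = (J : ℕ) := by rw [← he]
          omega
        rw [Pi.single_eq_of_ne hne2]
        simp
      · rw [dif_neg h]
  -- final computation
  simp only [ContinuousLinearMap.sub_apply, ContinuousLinearMap.add_apply,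
    ContinuousLinearMap.comp_apply, ContinuousLinearMap.prod_apply,
    ContinuousLinearMap.zero_apply, fderivInnerCLM_apply]
  rw [hsumu, hLz]
  rw [inner_sub_left]
  by_cases hJ : 1 ≤ (J : ℕ)
  · rw [dif_pos hJ, dif_pos hJ]
    simp [real_inner_comm]
  · rw [dif_neg hJ, dif_neg hJ]
    simp [real_inner_comm]

lemma gradG1 (hk : 1 ≤ k)
    (L : ℝ × (Fin (k+1) → Evec n) → ℝ)
    (χ : ℝ × (Fin k → Evec n) × Evec n → Evec n)
    (H : ℝ × (Fin k → Evec n) × (Fin k → Evec n) → ℝ)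
    (hH : ∀ (t : ℝ) (qs ps : Fin k → Evec n),
      H (t, qs, ps) =
        (∑ i : Fin k, if h : (i : ℕ) + 1 < k then ⟪ps i, qs ⟨(i : ℕ)+1, h⟩⟫ else 0)
        + ⟪ps ⟨k-1, by omega⟩, χ (t, qs, ps ⟨k-1, by omega⟩)⟫
        - L (t, Fin.snoc qs (χ (t, qs, ps ⟨k-1, by omega⟩))))
    (t : ℝ) (qs ps : Fin k → Evec n) (I : Fin k) (hI : (I : ℕ) + 1 < k) :
    HasGradientAt (fun v => H (t, qs, Function.update ps I v))
      (qs ⟨(I : ℕ)+1, hI⟩) (ps I) := by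
  set K : Fin k := ⟨k-1, by omega⟩ with hK
  have hIK : I ≠ K := by
    intro he
    have : (I : ℕ) = k - 1 := by rw [he]
    omega
  set v₀ : Evec n := ps I with hv₀
  set A : Fin k → Evec n → ℝ := fun i v =>
    if h : (i : ℕ) + 1 < k then ⟪Function.update ps I v i, qs ⟨(i : ℕ)+1, h⟩⟫ else 0 with hA
  set C : ℝ := ⟪ps K, χ (t, qs, ps K)⟫ - L (t, Fin.snoc qs (χ (t, qs, ps K))) with hC
  have hre : (fun v => H (t, qs, Function.update ps I v))
      = fun v => (∑ i : Fin k, A i v) + C := by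
    funext v
    rw [hH]
    have hKv : Function.update ps I v K = ps K := Function.update_of_ne (Ne.symm hIK) v ps
    rw [hKv, hC, hA]
    ring
  rw [hre]
  set A' : Fin k → (Evec n →L[ℝ] ℝ) := fun i =>
    if h : (i : ℕ) + 1 < k then
      (fderivInnerCLM ℝ ((Function.update ps I v₀ i : Evec n), qs ⟨(i : ℕ)+1, h⟩)).comp
        ((Ei n k I i).prod 0) else 0 with hA'
  have hAd : ∀ i : Fin k, HasFDerivAt (A i) (A' i) v₀ := by
    intro i
    by_cases h : (i : ℕ) + 1 < k
    · have h1 : HasFDerivAt (fun v : Evec n => Function.update ps I v i) (Ei n k I i) v₀ := by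
        have h0 := hasFDerivAt_update (𝕜 := ℝ) ps (i := I) v₀
        exact HasFDerivAt.comp (𝕜 := ℝ) v₀
          ((ContinuousLinearMap.proj (R := ℝ) (φ := fun _ : Fin k => Evec n) i).hasFDerivAt
            (x := Function.update ps I v₀)) h0
      have := h1.inner ℝ (hasFDerivAt_const (qs ⟨(i : ℕ)+1, h⟩) v₀)
      simpa [hA, hA', h] using this
    · simp only [hA, hA', dif_neg h]
      exact hasFDerivAt_const 0 v₀
  have hsum : HasFDerivAt (fun v => ∑ i : Fin k, A i v) (∑ i : Fin k, A' i) v₀ :=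
    HasFDerivAt.fun_sum fun i _ => hAd i
  have htotal := hsum.add_const C
  refine hasGradientAt_of htotal fun u => ?_
  rw [ContinuousLinearMap.sum_apply]
  have hterm : ∀ i : Fin k, A' i u
      = if h : (i : ℕ) + 1 < k then ⟪(Pi.single I u : Fin k → Evec n) i, qs ⟨(i : ℕ)+1, h⟩⟫ else 0 := by
    intro i
    by_cases h : (i : ℕ) + 1 < k
    · simp [hA', h, fderivInnerCLM_apply, Ei_apply]
    · simp [hA', h]
  rw [Finset.sum_congr rfl fun i _ => hterm i]
  rw [Finset.sum_eq_single I]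
  · rw [dif_pos hI, Pi.single_eq_same]
    exact real_inner_comm _ _
  · intro i _ hne
    by_cases h : (i : ℕ) + 1 < k
    · simp [h, Pi.single_apply, hne]
    · simp [h]
  · intro habs; exact absurd (Finset.mem_univ I) habs

lemma gradG2 (hk : 1 ≤ k)
    (L : ℝ × (Fin (k+1) → Evec n) → ℝ) (hL : Differentiable ℝ L)
    (χ : ℝ × (Fin k → Evec n) × Evec n → Evec n) (hχs : Differentiable ℝ χ)
    (hχ : ∀ (t : ℝ) (qs : Fin k → Evec n) (π : Evec n),
      pgrad L (Fin.last k) (t, Fin.snoc qs (χ (t, qs, π))) = π)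
    (H : ℝ × (Fin k → Evec n) × (Fin k → Evec n) → ℝ)
    (hH : ∀ (t : ℝ) (qs ps : Fin k → Evec n),
      H (t, qs, ps) =
        (∑ i : Fin k, if h : (i : ℕ) + 1 < k then ⟪ps i, qs ⟨(i : ℕ)+1, h⟩⟫ else 0)
        + ⟪ps ⟨k-1, by omega⟩, χ (t, qs, ps ⟨k-1, by omega⟩)⟫
        - L (t, Fin.snoc qs (χ (t, qs, ps ⟨k-1, by omega⟩))))
    (t : ℝ) (qs ps : Fin k → Evec n) :
    HasGradientAt (fun v => H (t, qs, Function.update ps ⟨k-1, by omega⟩ v))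
      (χ (t, qs, ps ⟨k-1, by omega⟩)) (ps ⟨k-1, by omega⟩) := by
  set K : Fin k := ⟨k-1, by omega⟩ with hK
  set v₀ : Evec n := ps K with hv₀
  set Ψ : Evec n → Evec n := fun v => χ (t, qs, v) with hΨdef
  -- rewrite the function
  have hre : (fun v => H (t, qs, Function.update ps K v))
      = fun v => (∑ i : Fin k, if h : (i : ℕ) + 1 < k then ⟪ps i, qs ⟨(i : ℕ)+1, h⟩⟫ else 0)
        + (⟪v, Ψ v⟫ - L (t, Fin.snoc qs (Ψ v))) := by
    funext v
    rw [hH]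
    have hKv : Function.update ps K v K = v := Function.update_self K v ps
    rw [hKv]
    have hsum : (∑ i : Fin k, if h : (i : ℕ) + 1 < k then ⟪Function.update ps K v i, qs ⟨(i : ℕ)+1, h⟩⟫ else 0)
        = ∑ i : Fin k, if h : (i : ℕ) + 1 < k then ⟪ps i, qs ⟨(i : ℕ)+1, h⟩⟫ else 0 := by
      refine Finset.sum_congr rfl fun i _ => ?_
      by_cases h : (i : ℕ) + 1 < k
      · have : i ≠ K := by
          intro he; rw [he] at h; simp [hK] at h; omega
        simp [h, Function.update_of_ne this]
      · simp [h]
    rw [hsum]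
    ring
  rw [hre]
  -- derivative of Ψ
  have hΨd : DifferentiableAt ℝ Ψ v₀ :=
    (hχs _).comp v₀ (DifferentiableAt.prodMk (differentiableAt_const t)
      (DifferentiableAt.prodMk (differentiableAt_const qs) differentiableAt_id))
  set DΨ := fderiv ℝ Ψ v₀ with hDΨ
  have hΨ : HasFDerivAt Ψ DΨ v₀ := hΨd.hasFDerivAt
  -- derivative of inner term
  have hinner : HasFDerivAt (fun v => ⟪v, Ψ v⟫)
      ((fderivInnerCLM ℝ (v₀, Ψ v₀)).comp ((ContinuousLinearMap.id ℝ (Evec n)).prod DΨ)) v₀ :=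
    (hasFDerivAt_id v₀).inner ℝ hΨ
  -- derivative of L-term
  have hLg : HasGradientAt (fun w => L (t, Fin.snoc qs w)) v₀ (Ψ v₀) := by
    have := hasGradientAt_snoc hL t qs (Ψ v₀)
    rwa [show Ψ v₀ = χ (t, qs, v₀) from rfl, hχ t qs v₀] at this
  have hLcomp : HasFDerivAt (fun v => L (t, Fin.snoc qs (Ψ v)))
      ((InnerProductSpace.toDual ℝ (Evec n) v₀).comp DΨ) v₀ :=
    hLg.hasFDerivAt.comp v₀ hΨ
  have htotal := (hasFDerivAt_const
      (∑ i : Fin k, if h : (i : ℕ) + 1 < k then ⟪ps i, qs ⟨(i : ℕ)+1, h⟩⟫ else 0) v₀).add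
      (hinner.sub hLcomp)
  refine hasGradientAt_of htotal fun u => ?_
  simp only [ContinuousLinearMap.add_apply, ContinuousLinearMap.sub_apply,
    ContinuousLinearMap.comp_apply, ContinuousLinearMap.prod_apply,
    ContinuousLinearMap.coe_id', id_eq, ContinuousLinearMap.zero_apply,
    fderivInnerCLM_apply, InnerProductSpace.toDual_apply_apply]
  rw [real_inner_comm u (Ψ v₀)]
  ring
end grads

/-- If `χ` is a smooth inverse of the highest Legendre relation
`∂L/∂q_k = π`, and `H = ∑_{i=0}^{k-2} ⟨p^i, q_{i+1}⟩ + ⟨p^{k-1}, χ⟩ − L(…, χ)` is the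
associated Hamiltonian, then for curves `q_0, …, q_{k-1}, p^0, …, p^{k-1}` (with
`q_k = χ(t, q_0, …, q_{k-1}, p^{k-1})`) the system consisting of the holonomy and momentum
equations is equivalent to the Hamilton equations for `H`. -/
theorem stmt5 (n k : ℕ) (hn : 1 ≤ n) (hk : 1 ≤ k)
    (L : ℝ × (Fin (k+1) → Evec n) → ℝ) (hL : ContDiff ℝ ∞ L)
    (χ : ℝ × (Fin k → Evec n) × Evec n → Evec n) (hχs : ContDiff ℝ ∞ χ)
    (hχ : ∀ (t : ℝ) (qs : Fin k → Evec n) (π : Evec n),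
      pgrad L (Fin.last k) (t, Fin.snoc qs (χ (t, qs, π))) = π)
    (H : ℝ × (Fin k → Evec n) × (Fin k → Evec n) → ℝ)
    (hH : ∀ (t : ℝ) (qs ps : Fin k → Evec n),
      H (t, qs, ps) =
        (∑ i : Fin k, if h : (i : ℕ) + 1 < k then ⟪ps i, qs ⟨(i : ℕ)+1, h⟩⟫ else 0)
        + ⟪ps ⟨k-1, by omega⟩, χ (t, qs, ps ⟨k-1, by omega⟩)⟫
        - L (t, Fin.snoc qs (χ (t, qs, ps ⟨k-1, by omega⟩))))
    (q p : ℕ → ℝ → Evec n)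
    (hq : ∀ i ≤ k - 1, ContDiff ℝ ∞ (q i)) (hp : ∀ i ≤ k - 1, ContDiff ℝ ∞ (p i))
    (hqk : ∀ t, q k t = χ (t, fun i : Fin k => q (i : ℕ) t, p (k-1) t)) :
    -- system (A): holonomy and momentum equations
    ((∀ i < k, ∀ t, deriv (q i) t = q (i+1) t) ∧
     (∀ t, deriv (p 0) t =
        pgrad L ⟨0, by omega⟩ (t, fun j : Fin (k+1) => q (j : ℕ) t)) ∧
     (∀ i, 1 ≤ i → ∀ hik : i ≤ k - 1, ∀ t,
        deriv (p i) t =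
          pgrad L ⟨i, by omega⟩ (t, fun j : Fin (k+1) => q (j : ℕ) t) - p (i-1) t))
    ↔
    -- system (B): the Hamilton equations for H
    (∀ i, ∀ hik : i < k, ∀ t,
      deriv (q i) t =
        gradient (fun v => H (t, (fun j : Fin k => q (j : ℕ) t),
          Function.update (fun j : Fin k => p (j : ℕ) t) ⟨i, hik⟩ v)) (p i t) ∧
      deriv (p i) t =
        - gradient (fun v => H (t, Function.update (fun j : Fin k => q (j : ℕ) t) ⟨i, hik⟩ v,
          (fun j : Fin k => p (j : ℕ) t))) (q i t)) := by
  have hL' : Differentiable ℝ L := hL.differentiable (by norm_num)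
  have hχs' : Differentiable ℝ χ := hχs.differentiable (by norm_num)
  -- key gradient identifications
  have key : ∀ (i : ℕ) (hik : i < k) (t : ℝ),
      (gradient (fun v => H (t, (fun j : Fin k => q (j : ℕ) t),
          Function.update (fun j : Fin k => p (j : ℕ) t) ⟨i, hik⟩ v)) (p i t) = q (i+1) t)
      ∧ (gradient (fun v => H (t, Function.update (fun j : Fin k => q (j : ℕ) t) ⟨i, hik⟩ v,
          (fun j : Fin k => p (j : ℕ) t))) (q i t)
          = (if 1 ≤ i then p (i-1) t else 0)
            - pgrad L ⟨i, by omega⟩ (t, fun j : Fin (k+1) => q (j : ℕ) t)) := by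
    intro i hik t
    have hsn : (Fin.snoc (fun j : Fin k => q (j : ℕ) t)
        (χ (t, (fun j : Fin k => q (j : ℕ) t), (fun j : Fin k => p (j : ℕ) t) ⟨k-1, by omega⟩))
          : Fin (k+1) → Evec n)
        = (fun j : Fin (k+1) => q (j : ℕ) t) := by
      funext m
      refine Fin.lastCases ?_ (fun j => ?_) m
      · rw [Fin.snoc_last]
        have := (hqk t).symm
        simpa [Fin.val_last] using this
      · simp [Fin.snoc_castSucc]
    constructor
    · by_cases h2 : i + 1 < k
      · have hg := (gradG1 hk L χ H hH t (fun j : Fin k => q (j : ℕ) t)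
          (fun j : Fin k => p (j : ℕ) t) ⟨i, hik⟩ h2).gradient
        simp only [Fin.val_mk] at hg
        exact hg
      · have hieq : (⟨i, hik⟩ : Fin k) = ⟨k-1, by omega⟩ := by
          apply Fin.ext; simp; omega
        rw [hieq]
        have hg := gradG2 hk L hL' χ hχs' hχ H hH t (fun j : Fin k => q (j : ℕ) t)
          (fun j : Fin k => p (j : ℕ) t)
        obtain rfl : i = k - 1 := by omega
        have hg2 := hg.gradient
        simp only [Fin.val_mk] at hg2
        rw [hg2]
        have hkk : k - 1 + 1 = k := by omega
        rw [hkk, hqk t]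
    · have hg := gradG3 hk L hL' χ hχs' hχ H hH t (fun j : Fin k => q (j : ℕ) t)
        (fun j : Fin k => p (j : ℕ) t) ⟨i, hik⟩
      have hg2 := hg.gradient
      rw [hsn] at hg2
      simp only [Fin.val_mk] at hg2
      rw [hg2]
      have hcast : (Fin.castSucc (⟨i, hik⟩ : Fin k)) = (⟨i, by omega⟩ : Fin (k+1)) := rfl
      rw [hcast]
      by_cases h1 : 1 ≤ i
      · rw [if_pos h1, dif_pos h1]
      · rw [if_neg h1, dif_neg h1]
  constructor
  · rintro ⟨hA1, hA2, hA3⟩ i hik t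
    refine ⟨?_, ?_⟩
    · rw [(key i hik t).1]; exact hA1 i hik t
    · rw [(key i hik t).2]
      by_cases h1 : 1 ≤ i
      · rw [if_pos h1, neg_sub]
        have := hA3 i h1 (by omega) t
        rw [this]
      · have hi0 : i = 0 := by omega
        subst hi0
        rw [if_neg h1, zero_sub, neg_neg]
        exact hA2 t
  · intro hB
    refine ⟨?_, ?_, ?_⟩
    · intro i hik t
      have := (hB i hik t).1
      rwa [(key i hik t).1] at this
    · intro t
      have h0k : 0 < k := hk
      have := (hB 0 h0k t).2
      rw [(key 0 h0k t).2] at this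
      simpa using this
    · intro i h1 hik t
      have hik' : i < k := by omega
      have := (hB i hik' t).2
      rw [(key i hik' t).2, if_pos h1, neg_sub] at this
      exact this
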